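/- arXiv:2503.23267 — 9 statements merged into one kernel-verified Lean document; each statement's English description precedes it below -/
import Mathlib

section
/- Let α : ℝ → ℝ be a continuous, strictly increasing function with α(0) = 0, and let t₀ ≤ t₁ be real numbers. Let b : ℝ → ℝ be differentiable on [t₀, t₁] with derivative b'(t) ≥ -α(b(t)) for all t ∈ [t₀, t₁]. If b(t₀) ≥ 0, then b(t) ≥ 0 for all t ∈ [t₀, t₁]. -/
/-- Comparison lemma (Lemma 1): if `b` is differentiable on `[t₀, t₁]` with derivative
`b' t ≥ -α (b t)` for an extended class κ function `α`, and `b t₀ ≥ 0`, then `b t ≥ 0`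
on `[t₀, t₁]`. -/
theorem comparison_lemma_barrier
    (α : ℝ → ℝ) (hαc : Continuous α) (hαm : StrictMono α) (hα0 : α 0 = 0)
    (t₀ t₁ : ℝ) (ht : t₀ ≤ t₁)
    (b b' : ℝ → ℝ)
    (hderiv : ∀ t ∈ Set.Icc t₀ t₁, HasDerivWithinAt b (b' t) (Set.Icc t₀ t₁) t)
    (hineq : ∀ t ∈ Set.Icc t₀ t₁, -α (b t) ≤ b' t)
    (hinit : 0 ≤ b t₀) :
    ∀ t ∈ Set.Icc t₀ t₁, 0 ≤ b t := by
  have hbcont : ContinuousOn b (Set.Icc t₀ t₁) :=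
    fun x hx => (hderiv x hx).continuousWithinAt
  by_contra h
  push_neg at h
  obtain ⟨s, hs, hbs⟩ := h
  set S : Set ℝ := {t ∈ Set.Icc t₀ s | 0 ≤ b t} with hSdef
  have hSne : S.Nonempty := ⟨t₀, ⟨le_refl _, hs.1⟩, hinit⟩
  have hSbdd : BddAbove S := ⟨s, fun x hx => hx.1.2⟩
  have hSsub : Set.Icc t₀ s ⊆ Set.Icc t₀ t₁ := Set.Icc_subset_Icc le_rfl hs.2
  have hSclosed : IsClosed S := by
    have : S = Set.Icc t₀ s ∩ b ⁻¹' Set.Ici 0 := by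
      ext x; simp [hSdef, Set.mem_inter_iff, and_comm]
    rw [this]
    exact ContinuousOn.preimage_isClosed_of_isClosed (hbcont.mono hSsub)
      isClosed_Icc isClosed_Ici
  set c := sSup S with hc
  have hcS : c ∈ S := hSclosed.csSup_mem hSne hSbdd
  have hcIcc : c ∈ Set.Icc t₀ s := hcS.1
  have hbc : 0 ≤ b c := hcS.2
  have hneg : ∀ t ∈ Set.Ioo c s, b t < 0 := by
    intro t htm
    by_contra hle
    push_neg at hle
    have : t ∈ S := ⟨⟨hcIcc.1.trans htm.1.le, htm.2.le⟩, hle⟩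
    exact absurd (le_csSup hSbdd this) (not_le.mpr htm.1)
  have hcs : c ≤ s := hcIcc.2
  have hsub : Set.Icc c s ⊆ Set.Icc t₀ t₁ := Set.Icc_subset_Icc hcIcc.1 hs.2
  have hmono : MonotoneOn b (Set.Icc c s) := by
    apply monotoneOn_of_deriv_nonneg (convex_Icc c s) (hbcont.mono hsub)
    · intro x hx
      rw [interior_Icc] at hx
      have hxmem : x ∈ Set.Ioo t₀ t₁ := ⟨lt_of_le_of_lt hcIcc.1 hx.1, lt_of_lt_of_le hx.2 hs.2⟩
      exact ((hderiv x (Set.Ioo_subset_Icc_self hxmem)).hasDerivAt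
        (Icc_mem_nhds hxmem.1 hxmem.2)).differentiableAt.differentiableWithinAt
    · intro x hx
      rw [interior_Icc] at hx
      have hxmem : x ∈ Set.Ioo t₀ t₁ := ⟨lt_of_le_of_lt hcIcc.1 hx.1, lt_of_lt_of_le hx.2 hs.2⟩
      have hD : HasDerivAt b (b' x) x :=
        (hderiv x (Set.Ioo_subset_Icc_self hxmem)).hasDerivAt (Icc_mem_nhds hxmem.1 hxmem.2)
      rw [hD.deriv]
      have hαneg : α (b x) < 0 := hα0 ▸ hαm (hneg x hx)
      linarith [hineq x (Set.Ioo_subset_Icc_self hxmem)]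
  have := hmono ⟨le_rfl, hcs⟩ ⟨hcs, le_rfl⟩ hcs
  linarith
end

section
/- Let m ≥ 1 be a natural number, and for each i ∈ {1, …, m} let αᵢ : ℝ → ℝ be a continuous, strictly increasing function with αᵢ(0) = 0. Let ψ₀, ψ₁, …, ψₘ : ℝ → ℝ be functions such that for each i ∈ {0, …, m−1}, ψᵢ is differentiable on [0, ∞) and ψ_{i+1}(t) = ψᵢ'(t) + α_{i+1}(ψᵢ(t)) for all t ≥ 0. If ψₘ(t) ≥ 0 for all t ≥ 0 and ψᵢ(0) ≥ 0 for every i ∈ {0, …, m−1}, then ψᵢ(t) ≥ 0 for all t ≥ 0 and every i ∈ {0, …, m−1}; in particular ψ₀(t) ≥ 0 for all t ≥ 0. -/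
/-- Comparison lemma: if `ψ' t = g t - a (ψ t)` on `[0,∞)` with `g ≥ 0`,
`a` strictly monotone with `a 0 = 0`, and `ψ 0 ≥ 0`, then `ψ ≥ 0` on `[0,∞)`. -/
lemma hocbf_comparison (a : ℝ → ℝ) (hmono : StrictMono a) (h0 : a 0 = 0)
    (ψ g : ℝ → ℝ)
    (hd : ∀ t ≥ (0 : ℝ), HasDerivWithinAt ψ (g t - a (ψ t)) (Set.Ici 0) t)
    (hg : ∀ t ≥ (0 : ℝ), 0 ≤ g t) (hψ0 : 0 ≤ ψ 0) :
    ∀ t ≥ (0 : ℝ), 0 ≤ ψ t := by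
  intro t1 ht1
  by_contra hneg
  push_neg at hneg
  have hcont : ContinuousOn ψ (Set.Ici 0) := fun x hx => (hd x hx).continuousWithinAt
  set S := Set.Icc (0 : ℝ) t1 ∩ ψ ⁻¹' Set.Ici 0 with hSdef
  have h0S : (0 : ℝ) ∈ S := ⟨⟨le_refl _, ht1⟩, hψ0⟩
  have hbdd : BddAbove S := ⟨t1, fun x hx => hx.1.2⟩
  have hclosed : IsClosed S :=
    (hcont.mono (Set.Icc_subset_Ici_self)).preimage_isClosed_of_isClosed
      isClosed_Icc isClosed_Ici
  set s := sSup S with hsdef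
  have hsmem : s ∈ S := hclosed.csSup_mem ⟨0, h0S⟩ hbdd
  have hs0 : (0 : ℝ) ≤ s := hsmem.1.1
  have hst1 : s ≤ t1 := hsmem.1.2
  have hψs : 0 ≤ ψ s := hsmem.2
  have hslt : s < t1 := by
    rcases lt_or_eq_of_le hst1 with h | h
    · exact h
    · exact absurd (h ▸ hψs) (not_le.mpr hneg)
  have hnegOn : ∀ x, s < x → x ≤ t1 → ψ x < 0 := by
    intro x hx hxle
    by_contra hge
    push_neg at hge
    have hxS : x ∈ S := ⟨⟨le_trans hs0 hx.le, hxle⟩, hge⟩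
    exact absurd (le_csSup hbdd hxS) (not_le.mpr hx)
  have hcont' : ContinuousOn ψ (Set.Icc s t1) :=
    hcont.mono fun x hx => le_trans hs0 hx.1
  have hderiv : ∀ x ∈ interior (Set.Icc s t1), 0 < deriv ψ x := by
    intro x hx
    rw [interior_Icc] at hx
    have hx0 : (0 : ℝ) < x := lt_of_le_of_lt hs0 hx.1
    have hda : HasDerivAt ψ (g x - a (ψ x)) x :=
      (hd x hx0.le).hasDerivAt (Ici_mem_nhds hx0)
    rw [hda.deriv]
    have hψx : ψ x < 0 := hnegOn x hx.1 hx.2.le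
    have haneg : a (ψ x) < 0 := h0 ▸ hmono hψx
    have := hg x hx0.le
    linarith
  have hsm : StrictMonoOn ψ (Set.Icc s t1) :=
    strictMonoOn_of_deriv_pos (convex_Icc s t1) hcont' hderiv
  have : ψ s < ψ t1 :=
    hsm ⟨le_refl s, hst1⟩ ⟨hslt.le, le_refl t1⟩ hslt
  linarith

/-- HOCBF safety guarantee along a trajectory (Theorem 1, scalar-in-time form).
Given extended class κ functions `α 1, …, α m` and a chain
`ψ (i+1) t = (ψ i)' t + α (i+1) (ψ i t)` (each `ψ i`, `i < m`, differentiable on `[0, ∞)`),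
if `ψ m t ≥ 0` for all `t ≥ 0` and `ψ i 0 ≥ 0` for all `i < m`, then `ψ i t ≥ 0`
for all `t ≥ 0` and all `i < m`; in particular `ψ 0 t ≥ 0`. -/
theorem hocbf_chain_nonneg
    (m : ℕ) (hm : 1 ≤ m)
    (α : ℕ → ℝ → ℝ)
    (hα : ∀ i, 1 ≤ i → i ≤ m →
      Continuous (α i) ∧ StrictMono (α i) ∧ α i 0 = 0)
    (ψ : ℕ → ℝ → ℝ)
    (hchain : ∀ i < m, ∀ t ≥ (0 : ℝ),
      HasDerivWithinAt (ψ i) (ψ (i + 1) t - α (i + 1) (ψ i t)) (Set.Ici 0) t)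
    (htop : ∀ t ≥ (0 : ℝ), 0 ≤ ψ m t)
    (hinit : ∀ i < m, 0 ≤ ψ i 0) :
    (∀ i < m, ∀ t ≥ (0 : ℝ), 0 ≤ ψ i t) ∧ (∀ t ≥ (0 : ℝ), 0 ≤ ψ 0 t) := by
  have key : ∀ j, j ≤ m → ∀ t ≥ (0 : ℝ), 0 ≤ ψ (m - j) t := by
    intro j
    induction j with
    | zero => simpa using htop
    | succ k ih =>
      intro hk1
      have hk : k ≤ m := le_of_lt hk1
      have hlt : m - (k + 1) < m := by omega
      have hsucc : m - (k + 1) + 1 = m - k := by omega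
      obtain ⟨hc, hmono, h0⟩ := hα (m - (k + 1) + 1) (by omega) (by omega)
      exact hocbf_comparison _ hmono h0 _ _ (hchain _ hlt)
        (by rw [hsucc]; exact ih hk) (hinit _ hlt)
  have main : ∀ i < m, ∀ t ≥ (0 : ℝ), 0 ≤ ψ i t := by
    intro i hi
    have : m - (m - i) = i := by omega
    exact this ▸ key (m - i) (by omega)
  exact ⟨main, main 0 hm⟩
end

section
/- Let n, q be positive natural numbers and m ≥ 1. Let f : ℝⁿ → ℝⁿ and g : ℝⁿ → ℝ^{n×q} be functions, let u : ℝ → ℝ^q be a control signal, and let x : ℝ → ℝⁿ be a trajectory satisfying x'(t) = f(x(t)) + g(x(t)) u(t) for all t ≥ 0. For each i ∈ {1, …, m} let αᵢ : ℝ → ℝ be a continuous, strictly increasing function with αᵢ(0) = 0. Let ψ₀, …, ψ_{m−1} : ℝⁿ → ℝ be continuously differentiable functions satisfying, for every i ∈ {0, …, m−2} and every z ∈ ℝⁿ: (a) Dψᵢ(z)(g(z) w) = 0 for every w ∈ ℝ^q (relative-degree condition), and (b) ψ_{i+1}(z) = Dψᵢ(z)(f(z)) + α_{i+1}(ψᵢ(z)).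 Suppose the highest-order inequality Dψ_{m−1}(x(t))(f(x(t)) + g(x(t)) u(t)) + αₘ(ψ_{m−1}(x(t))) ≥ 0 holds for all t ≥ 0, and ψᵢ(x(0)) ≥ 0 for every i ∈ {0, …, m−1}. Then ψᵢ(x(t)) ≥ 0 for all t ≥ 0 and every i ∈ {0, …, m−1}; in particular ψ₀(x(t)) ≥ 0 for all t ≥ 0. -/
/-- Comparison lemma: if `y' ≥ -α'(y)` with `α'` strictly monotone and `α' 0 = 0`,
and `y 0 ≥ 0`, then `y t ≥ 0` for all `t ≥ 0`. -/
lemma hocbf_comparison_nonneg (y α' yd : ℝ → ℝ) (hmono : StrictMono α') (h0 : α' 0 = 0)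
    (hy : ∀ t ≥ (0:ℝ), HasDerivAt y (yd t) t)
    (hineq : ∀ t ≥ (0:ℝ), -(α' (y t)) ≤ yd t)
    (hinit : 0 ≤ y 0) : ∀ t ≥ (0:ℝ), 0 ≤ y t := by
  intro t ht
  by_contra hneg
  push_neg at hneg
  have hcont : ContinuousOn y (Set.Icc 0 t) := fun s hs =>
    ((hy s hs.1).continuousAt).continuousWithinAt
  set S := Set.Icc (0:ℝ) t ∩ y ⁻¹' Set.Ici 0 with hS
  have hSne : S.Nonempty := ⟨0, ⟨le_refl 0, ht⟩, hinit⟩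
  have hSclosed : IsClosed S :=
    hcont.preimage_isClosed_of_isClosed isClosed_Icc isClosed_Ici
  have hScomp : IsCompact S :=
    isCompact_Icc.of_isClosed_subset hSclosed Set.inter_subset_left
  set s₀ := sSup S with hs₀def
  have hs₀mem : s₀ ∈ S := hScomp.sSup_mem hSne
  obtain ⟨⟨hs₀0, hs₀t⟩, hys₀⟩ := hs₀mem
  have hys₀' : 0 ≤ y s₀ := hys₀
  have hs₀lt : s₀ < t := by
    rcases lt_or_eq_of_le hs₀t with h | h
    · exact h
    · exact absurd (h ▸ hys₀') (not_le.2 hneg)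
  have hbdd : BddAbove S := hScomp.bddAbove
  have hnegOn : ∀ s, s₀ < s → s ≤ t → y s < 0 := by
    intro s hs₀s hst
    by_contra h
    push_neg at h
    have : s ∈ S := ⟨⟨le_trans hs₀0 hs₀s.le, hst⟩, h⟩
    exact absurd (le_csSup hbdd this) (not_le.2 hs₀s)
  have hmonoY : MonotoneOn y (Set.Icc s₀ t) := by
    apply monotoneOn_of_deriv_nonneg (convex_Icc _ _)
      (hcont.mono (Set.Icc_subset_Icc hs₀0 le_rfl))
    · rw [interior_Icc]
      intro s hs
      exact ((hy s (le_trans hs₀0 hs.1.le)).differentiableAt).differentiableWithinAt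
    · rw [interior_Icc]
      intro s hs
      have hs0 : (0:ℝ) ≤ s := le_trans hs₀0 hs.1.le
      rw [(hy s hs0).deriv]
      have hys : y s < 0 := hnegOn s hs.1 hs.2.le
      have hαneg : α' (y s) < 0 := h0 ▸ hmono hys
      linarith [hineq s hs0]
  have := hmonoY (Set.left_mem_Icc.2 hs₀t) (Set.right_mem_Icc.2 hs₀t) hs₀t
  linarith

/-- Theorem 1 (HOCBF safety guarantee) stated along a trajectory of the affine control
system `ẋ = f x + g x * u`. The functions `ψ 0, …, ψ (m-1) : ℝⁿ → ℝ` are continuously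
differentiable, satisfy the relative-degree condition `Dψᵢ(z)(g z w) = 0` and the chain
`ψ (i+1) z = Dψᵢ(z)(f z) + α (i+1) (ψ i z)` for `i ≤ m - 2`. If the highest-order HOCBF
inequality holds along the trajectory and all `ψ i (x 0) ≥ 0`, then `ψ i (x t) ≥ 0` for all
`t ≥ 0`; in particular `ψ 0 (x t) ≥ 0`. -/
theorem hocbf_safety_guarantee
    (n q m : ℕ) (hn : 0 < n) (hq : 0 < q) (hm : 1 ≤ m)
    (f : (Fin n → ℝ) → (Fin n → ℝ))
    (g : (Fin n → ℝ) → Matrix (Fin n) (Fin q) ℝ)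
    (u : ℝ → (Fin q → ℝ)) (x : ℝ → (Fin n → ℝ))
    (hx : ∀ t ≥ (0 : ℝ), HasDerivAt x (f (x t) + (g (x t)).mulVec (u t)) t)
    (α : ℕ → ℝ → ℝ)
    (hα : ∀ i, 1 ≤ i → i ≤ m →
      Continuous (α i) ∧ StrictMono (α i) ∧ α i 0 = 0)
    (ψ : ℕ → (Fin n → ℝ) → ℝ)
    (hsmooth : ∀ i < m, ContDiff ℝ 1 (ψ i))
    (hreldeg : ∀ i, i + 1 < m → ∀ z : Fin n → ℝ, ∀ w : Fin q → ℝ,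
      fderiv ℝ (ψ i) z ((g z).mulVec w) = 0)
    (hchain : ∀ i, i + 1 < m → ∀ z : Fin n → ℝ,
      ψ (i + 1) z = fderiv ℝ (ψ i) z (f z) + α (i + 1) (ψ i z))
    (htop : ∀ t ≥ (0 : ℝ),
      0 ≤ fderiv ℝ (ψ (m - 1)) (x t) (f (x t) + (g (x t)).mulVec (u t))
            + α m (ψ (m - 1) (x t)))
    (hinit : ∀ i < m, 0 ≤ ψ i (x 0)) :
    (∀ i < m, ∀ t ≥ (0 : ℝ), 0 ≤ ψ i (x t)) ∧ (∀ t ≥ (0 : ℝ), 0 ≤ ψ 0 (x t)) := by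
  have key : ∀ j, ∀ t ≥ (0:ℝ), 0 ≤ ψ (m - 1 - j) (x t) := by
    intro j
    induction j with
    | zero =>
      simp only [Nat.sub_zero]
      obtain ⟨_, hmono, h0⟩ := hα m hm le_rfl
      exact hocbf_comparison_nonneg (fun s => ψ (m-1) (x s)) (α m)
        (fun t => fderiv ℝ (ψ (m-1)) (x t) (f (x t) + (g (x t)).mulVec (u t))) hmono h0
        (fun t ht => (((hsmooth (m-1) (by omega)).differentiable one_ne_zero
          (x t)).hasFDerivAt).comp_hasDerivAt t (hx t ht))
        (fun t ht => by linarith [htop t ht])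
        (hinit (m-1) (by omega))
    | succ j ih =>
      by_cases hj : m - 1 ≤ j
      · have heq : m - 1 - (j+1) = m - 1 - j := by omega
        rw [heq]; exact ih
      · push_neg at hj
        set i := m - 1 - (j+1) with hi
        have hi1 : i + 1 < m := by omega
        have hieq : m - 1 - j = i + 1 := by omega
        rw [hieq] at ih
        obtain ⟨_, hmono, h0⟩ := hα (i+1) (by omega) (by omega)
        refine hocbf_comparison_nonneg (fun s => ψ i (x s)) (α (i+1))
          (fun t => ψ (i+1) (x t) - α (i+1) (ψ i (x t))) hmono h0 ?_ ?_
          (hinit i (by omega))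
        · intro t ht
          have hd := (((hsmooth i (by omega)).differentiable one_ne_zero
            (x t)).hasFDerivAt).comp_hasDerivAt t (hx t ht)
          have heq : (fderiv ℝ (ψ i) (x t)) (f (x t) + (g (x t)).mulVec (u t))
              = ψ (i+1) (x t) - α (i+1) (ψ i (x t)) := by
            rw [map_add, hreldeg i hi1 (x t) (u t), hchain i hi1 (x t)]; ring
          rw [heq] at hd
          exact hd
        · intro t ht
          show -(α (i+1) (ψ i (x t))) ≤ ψ (i+1) (x t) - α (i+1) (ψ i (x t))
          have := ih t ht
          linarith
  constructor
  · intro i him t ht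
    have h := key (m - 1 - i) t ht
    have : m - 1 - (m - 1 - i) = i := by omega
    rwa [this] at h
  · intro t ht
    have h := key (m - 1) t ht
    have : m - 1 - (m - 1) = 0 := by omega
    rwa [this] at h
end

section
/- Let m ≥ 1 and m_a ≥ 1 be natural numbers. For i ∈ {1, …, m} let αᵢ : ℝ → ℝ, and for j ∈ {1, …, m_a} let βⱼ : ℝ → ℝ, all continuous, strictly increasing functions with value 0 at 0. Let ψ₀, …, ψₘ : ℝ → ℝ and φ₀, …, φ_{m_a} : ℝ → ℝ be functions such that: each ψᵢ with i ∈ {0, …, m−1} and each φⱼ with j ∈ {0, …, m_a−1} is differentiable on [0, ∞); ψ_{i+1}(t) = ψᵢ'(t) + α_{i+1}(ψᵢ(t)) for all i ∈ {0, …, m−1} and t ≥ 0; φ₀ = ψₘ; and φ_{j+1}(t) = φⱼ'(t) + β_{j+1}(φⱼ(t)) for all j ∈ {0, …, m_a−1} and t ≥ 0. If φ_{m_a}(t) ≥ 0 for all t ≥ 0, ψᵢ(0) ≥ 0 for every i ∈ {0, …, m−1}, and φⱼ(0) ≥ 0 for every j ∈ {0, …, m_a−1}, then ψᵢ(t) ≥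 0 and φⱼ(t) ≥ 0 for all t ≥ 0, every i ∈ {0, …, m−1}, and every j ∈ {0, …, m_a−1}; in particular the safety function ψ₀ satisfies ψ₀(t) ≥ 0 for all t ≥ 0. -/
/-- Comparison lemma: if `f' t = g t - a (f t)` on `[0,∞)` with `g ≥ 0` there,
`a` strictly monotone with `a 0 = 0`, and `f 0 ≥ 0`, then `f ≥ 0` on `[0,∞)`. -/
lemma fcbf_aux (f g a : ℝ → ℝ) (ha : StrictMono a) (ha0 : a 0 = 0)
    (hf : ∀ t ≥ (0:ℝ), HasDerivWithinAt f (g t - a (f t)) (Set.Ici 0) t)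
    (hg : ∀ t ≥ (0:ℝ), 0 ≤ g t) (h0 : 0 ≤ f 0) :
    ∀ t ≥ (0:ℝ), 0 ≤ f t := by
  intro t1 ht1
  by_contra hneg
  push_neg at hneg
  have hcont : ContinuousOn f (Set.Icc 0 t1) := fun x hx =>
    ((hf x hx.1).continuousWithinAt).mono (fun y hy => hy.1)
  set S := Set.Icc (0:ℝ) t1 ∩ f ⁻¹' Set.Ici 0 with hS
  have hSclosed : IsClosed S :=
    hcont.preimage_isClosed_of_isClosed isClosed_Icc isClosed_Ici
  have hSne : S.Nonempty := ⟨0, ⟨le_refl 0, ht1⟩, h0⟩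
  have hSbdd : BddAbove S := ⟨t1, fun x hx => hx.1.2⟩
  set s := sSup S with hs
  have hsmem : s ∈ S := hSclosed.csSup_mem hSne hSbdd
  have hs0 : 0 ≤ s := hsmem.1.1
  have hst1 : s ≤ t1 := hsmem.1.2
  have hfs : 0 ≤ f s := hsmem.2
  have hlt : ∀ x, s < x → x ≤ t1 → f x < 0 := by
    intro x hsx hxt1
    by_contra hfx
    push_neg at hfx
    have : x ∈ S := ⟨⟨le_trans hs0 hsx.le, hxt1⟩, hfx⟩
    exact absurd (le_csSup hSbdd this) (not_le.mpr hsx)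
  have hslt : s < t1 := hst1.lt_of_ne (fun h => absurd (h ▸ hfs) (not_le.mpr hneg))
  -- f is monotone on [s, t1]
  have hmono : MonotoneOn f (Set.Icc s t1) := by
    apply monotoneOn_of_deriv_nonneg (convex_Icc s t1)
      (hcont.mono (Set.Icc_subset_Icc_left hs0))
    · intro x hx
      rw [interior_Icc] at hx
      have hx0 : (0:ℝ) < x := lt_of_le_of_lt hs0 hx.1
      exact (((hf x hx0.le).hasDerivAt (Ici_mem_nhds hx0)).differentiableAt).differentiableWithinAt
    · intro x hx
      rw [interior_Icc] at hx
      have hx0 : (0:ℝ) < x := lt_of_le_of_lt hs0 hx.1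
      have hd : HasDerivAt f (g x - a (f x)) x :=
        (hf x hx0.le).hasDerivAt (Ici_mem_nhds hx0)
      rw [hd.deriv]
      have hfx : f x < 0 := hlt x hx.1 hx.2.le
      have : a (f x) < 0 := ha0 ▸ ha hfx
      linarith [hg x hx0.le]
  have := hmono ⟨le_refl s, hst1⟩ ⟨hst1, le_refl t1⟩ hst1
  linarith

/-- Theorem 2 (FCBF safety guarantee, along-trajectory form). Two glued chains:
the HOCBF chain `ψ (i+1) t = (ψ i)' t + α (i+1) (ψ i t)` of relative degree `m`, and
the FCBF chain `φ (j+1) t = (φ j)' t + β (j+1) (φ j t)` of relative degree `m_a` with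
base `φ 0 = ψ m`. Nonnegativity of the topmost FCBF inequality `φ m_a` together with
initial nonnegativity of all lower levels renders all levels nonnegative for all `t ≥ 0`;
in particular the safety function `ψ 0` stays nonnegative. -/
theorem fcbf_safety_guarantee
    (m ma : ℕ) (hm : 1 ≤ m) (hma : 1 ≤ ma)
    (α β : ℕ → ℝ → ℝ)
    (hα : ∀ i, 1 ≤ i → i ≤ m →
      Continuous (α i) ∧ StrictMono (α i) ∧ α i 0 = 0)
    (hβ : ∀ j, 1 ≤ j → j ≤ ma →
      Continuous (β j) ∧ StrictMono (β j) ∧ β j 0 = 0)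
    (ψ φ : ℕ → ℝ → ℝ)
    (hψchain : ∀ i < m, ∀ t ≥ (0 : ℝ),
      HasDerivWithinAt (ψ i) (ψ (i + 1) t - α (i + 1) (ψ i t)) (Set.Ici 0) t)
    (hbase : φ 0 = ψ m)
    (hφchain : ∀ j < ma, ∀ t ≥ (0 : ℝ),
      HasDerivWithinAt (φ j) (φ (j + 1) t - β (j + 1) (φ j t)) (Set.Ici 0) t)
    (htop : ∀ t ≥ (0 : ℝ), 0 ≤ φ ma t)
    (hψinit : ∀ i < m, 0 ≤ ψ i 0)
    (hφinit : ∀ j < ma, 0 ≤ φ j 0) :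
    (∀ i < m, ∀ t ≥ (0 : ℝ), 0 ≤ ψ i t) ∧
    (∀ j < ma, ∀ t ≥ (0 : ℝ), 0 ≤ φ j t) ∧
    (∀ t ≥ (0 : ℝ), 0 ≤ ψ 0 t) := by
  -- downward induction on the φ chain
  have hφall : ∀ d j, j + d = ma → ∀ t ≥ (0:ℝ), 0 ≤ φ j t := by
    intro d
    induction d with
    | zero =>
      intro j hj t ht
      have hje : j = ma := by omega
      subst hje; exact htop t ht
    | succ d ih =>
      intro j hj t ht
      have hjlt : j < ma := by omega
      obtain ⟨_, hmono, h0⟩ := hβ (j+1) (by omega) (by omega)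
      exact fcbf_aux (φ j) (φ (j+1)) (β (j+1)) hmono h0
        (hφchain j hjlt) (ih (j+1) (by omega)) (hφinit j hjlt) t ht
  have hψall : ∀ d i, i + d = m → ∀ t ≥ (0:ℝ), 0 ≤ ψ i t := by
    intro d
    induction d with
    | zero =>
      intro i hi t ht
      have : 0 ≤ φ 0 t := hφall ma 0 (by omega) t ht
      rw [hbase] at this
      simpa [← hi] using this
    | succ d ih =>
      intro i hi t ht
      have hilt : i < m := by omega
      obtain ⟨_, hmono, h0⟩ := hα (i+1) (by omega) (by omega)
      exact fcbf_aux (ψ i) (ψ (i+1)) (α (i+1)) hmono h0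
        (hψchain i hilt) (ih (i+1) (by omega)) (hψinit i hilt) t ht
  refine ⟨fun i hi => hψall (m - i) i (by omega), fun j hj => hφall (ma - j) j (by omega),
    fun t ht => hψall m 0 (by omega) t ht⟩
end

section
/- Let u_min < u_max be real numbers, let m_a ≥ 1, and for j ∈ {1, …, m_a} let αⱼ^{min}, αⱼ^{max} : ℝ → ℝ be continuous, strictly increasing functions with value 0 at 0. Let u_f : ℝ → ℝ be a function and define ψ₀^{min}(t) = u_f(t) − u_min and ψ₀^{max}(t) = u_max − u_f(t). Suppose the two chains ψⱼ^{min}(t) = (ψ_{j−1}^{min})'(t) + αⱼ^{min}(ψ_{j−1}^{min}(t)) and ψⱼ^{max}(t) = (ψ_{j−1}^{max})'(t) + αⱼ^{max}(ψ_{j−1}^{max}(t)) are well defined (each ψⱼ^{min}, ψⱼ^{max} with j < m_a is differentiable on [0, ∞)), that ψ_{m_a}^{min}(t) ≥ 0 and ψ_{m_a}^{max}(t) ≥ 0 for all t ≥ 0, and that ψⱼ^{min}(0) ≥ 0 and ψⱼ^{max}(0) ≥ 0 for every j ∈ {0, …, m_a−1}. Then: (1) u_min ≤ u_f(t) ≤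 u_max for all t ≥ 0; and (2) u_f is Lipschitz continuous on [0, ∞), namely |u_f(t) − u_f(s)| ≤ L·|t − s| for all t, s ≥ 0, where L = max(α₁^{min}(u_max − u_min), α₁^{max}(u_max − u_min)). -/
lemma chain_nonneg_aux (α ψ φ : ℝ → ℝ) (hmono : StrictMono α) (hz : α 0 = 0)
    (hd : ∀ t ≥ (0:ℝ), HasDerivWithinAt ψ (φ t - α (ψ t)) (Set.Ici 0) t)
    (hφ : ∀ t ≥ (0:ℝ), 0 ≤ φ t) (hψ0 : 0 ≤ ψ 0) : ∀ t ≥ (0:ℝ), 0 ≤ ψ t := by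
  intro t₀ ht₀
  by_contra hneg
  push_neg at hneg
  have hcont : ContinuousOn ψ (Set.Ici 0) := fun x hx => (hd x hx).continuousWithinAt
  set S : Set ℝ := {x ∈ Set.Icc (0:ℝ) t₀ | 0 ≤ ψ x} with hS
  have hSclosed : IsClosed S := by
    have : S = Set.Icc (0:ℝ) t₀ ∩ ψ ⁻¹' Set.Ici 0 := by ext x; simp [hS, Set.mem_setOf_eq, and_comm]
    rw [this]
    exact ContinuousOn.preimage_isClosed_of_isClosed
      (hcont.mono (Set.Icc_subset_Ici_self)) isClosed_Icc isClosed_Ici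
  have hSne : S.Nonempty := ⟨0, ⟨Set.left_mem_Icc.2 ht₀, hψ0⟩⟩
  have hSbdd : BddAbove S := ⟨t₀, fun x hx => hx.1.2⟩
  set s := sSup S with hs
  have hsS : s ∈ S := hSclosed.csSup_mem hSne hSbdd
  have hs0 : 0 ≤ s := hsS.1.1
  have hsψ : 0 ≤ ψ s := hsS.2
  have hst : s < t₀ := lt_of_le_of_ne hsS.1.2 (fun h => by
    rw [h] at hsψ; linarith)
  have hIoc : ∀ x ∈ Set.Ioc s t₀, ψ x < 0 := by
    intro x hx
    by_contra hge
    push_neg at hge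
    have : x ∈ S := ⟨⟨le_trans hs0 hx.1.le, hx.2⟩, hge⟩
    exact absurd (le_csSup hSbdd this) (not_le.2 hx.1)
  have hmonoOn : StrictMonoOn ψ (Set.Icc s t₀) := by
    apply strictMonoOn_of_deriv_pos (convex_Icc s t₀)
      (hcont.mono (fun x hx => le_trans hs0 hx.1))
    intro x hx
    rw [interior_Icc] at hx
    have hx0 : (0:ℝ) < x := lt_of_le_of_lt hs0 hx.1
    have hda : HasDerivAt ψ (φ x - α (ψ x)) x :=
      (hd x hx0.le).hasDerivAt (Ici_mem_nhds hx0)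
    rw [hda.deriv]
    have hψx : ψ x < 0 := hIoc x ⟨hx.1, hx.2.le⟩
    have : α (ψ x) < 0 := hz ▸ hmono hψx
    have := hφ x hx0.le
    linarith
  have := hmonoOn (Set.left_mem_Icc.2 hst.le) (Set.right_mem_Icc.2 hst.le) hst
  linarith

lemma chain_all_nonneg (ma : ℕ) (α ψ : ℕ → ℝ → ℝ)
    (hα : ∀ j, 1 ≤ j → j ≤ ma → StrictMono (α j) ∧ α j 0 = 0)
    (hch : ∀ j < ma, ∀ t ≥ (0:ℝ),
      HasDerivWithinAt (ψ j) (ψ (j+1) t - α (j+1) (ψ j t)) (Set.Ici 0) t)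
    (htop : ∀ t ≥ (0:ℝ), 0 ≤ ψ ma t)
    (hinit : ∀ j < ma, 0 ≤ ψ j 0) :
    ∀ j ≤ ma, ∀ t ≥ (0:ℝ), 0 ≤ ψ j t := by
  suffices h : ∀ k, ∀ j, j + k = ma → ∀ t ≥ (0:ℝ), 0 ≤ ψ j t by
    intro j hj; exact h (ma - j) j (by omega)
  intro k
  induction k with
  | zero =>
    intro j hj
    have hjm : j = ma := by omega
    subst hjm; exact htop
  | succ k ih =>
    intro j hj
    have hjlt : j < ma := by omega
    obtain ⟨hm, hz⟩ := hα (j+1) (by omega) (by omega)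
    exact chain_nonneg_aux (α (j+1)) (ψ j) (ψ (j+1)) hm hz
      (hch j hjlt) (ih (j+1) (by omega)) (hinit j hjlt)



/-- Theorem 3 (scalar component). Input-bound HOCBF chains built on
`ψmin 0 = u_f - u_min` and `ψmax 0 = u_max - u_f` of relative degree `m_a`:
if their topmost levels are nonnegative for all `t ≥ 0` and all lower levels are
nonnegative at `t = 0`, then `u_min ≤ u_f t ≤ u_max` for all `t ≥ 0`, and `u_f` is
Lipschitz continuous on `[0, ∞)` with constant
`L = max (αmin 1 (u_max - u_min)) (αmax 1 (u_max - u_min))`. -/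
theorem filtered_input_bounds_and_lipschitz
    (umin umax : ℝ) (hlt : umin < umax)
    (ma : ℕ) (hma : 1 ≤ ma)
    (αmin αmax : ℕ → ℝ → ℝ)
    (hαmin : ∀ j, 1 ≤ j → j ≤ ma →
      Continuous (αmin j) ∧ StrictMono (αmin j) ∧ αmin j 0 = 0)
    (hαmax : ∀ j, 1 ≤ j → j ≤ ma →
      Continuous (αmax j) ∧ StrictMono (αmax j) ∧ αmax j 0 = 0)
    (uf : ℝ → ℝ)
    (ψmin ψmax : ℕ → ℝ → ℝ)
    (hbasemin : ∀ t, ψmin 0 t = uf t - umin)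
    (hbasemax : ∀ t, ψmax 0 t = umax - uf t)
    (hchmin : ∀ j < ma, ∀ t ≥ (0 : ℝ),
      HasDerivWithinAt (ψmin j) (ψmin (j + 1) t - αmin (j + 1) (ψmin j t)) (Set.Ici 0) t)
    (hchmax : ∀ j < ma, ∀ t ≥ (0 : ℝ),
      HasDerivWithinAt (ψmax j) (ψmax (j + 1) t - αmax (j + 1) (ψmax j t)) (Set.Ici 0) t)
    (htopmin : ∀ t ≥ (0 : ℝ), 0 ≤ ψmin ma t)
    (htopmax : ∀ t ≥ (0 : ℝ), 0 ≤ ψmax ma t)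
    (hinitmin : ∀ j < ma, 0 ≤ ψmin j 0)
    (hinitmax : ∀ j < ma, 0 ≤ ψmax j 0) :
    (∀ t ≥ (0 : ℝ), umin ≤ uf t ∧ uf t ≤ umax) ∧
    (∀ t ≥ (0 : ℝ), ∀ s ≥ (0 : ℝ),
      |uf t - uf s| ≤
        max (αmin 1 (umax - umin)) (αmax 1 (umax - umin)) * |t - s|) := by
  have hminall : ∀ j ≤ ma, ∀ t ≥ (0:ℝ), 0 ≤ ψmin j t :=
    chain_all_nonneg ma αmin ψmin (fun j h1 h2 => ⟨(hαmin j h1 h2).2.1, (hαmin j h1 h2).2.2⟩)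
      hchmin htopmin hinitmin
  have hmaxall : ∀ j ≤ ma, ∀ t ≥ (0:ℝ), 0 ≤ ψmax j t :=
    chain_all_nonneg ma αmax ψmax (fun j h1 h2 => ⟨(hαmax j h1 h2).2.1, (hαmax j h1 h2).2.2⟩)
      hchmax htopmax hinitmax
  have hbounds : ∀ t ≥ (0:ℝ), umin ≤ uf t ∧ uf t ≤ umax := by
    intro t ht
    have h1 := hminall 0 (by omega) t ht
    have h2 := hmaxall 0 (by omega) t ht
    rw [hbasemin t] at h1
    rw [hbasemax t] at h2
    constructor <;> linarith
  refine ⟨hbounds, ?_⟩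
  obtain ⟨_, hmmin, hzmin⟩ := hαmin 1 le_rfl hma
  obtain ⟨_, hmmax, hzmax⟩ := hαmax 1 le_rfl hma
  set L := max (αmin 1 (umax - umin)) (αmax 1 (umax - umin)) with hL
  -- derivative of uf within Ici 0
  set f' : ℝ → ℝ := fun x => ψmin 1 x - αmin 1 (ψmin 0 x) with hf'
  have hduf : ∀ x ∈ Set.Ici (0:ℝ), HasDerivWithinAt uf (f' x) (Set.Ici 0) x := by
    intro x hx
    have h := (hchmin 0 (by omega) x hx).add_const umin
    have : (fun t => ψmin 0 t + umin) = uf := by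
      funext t; rw [hbasemin t]; ring
    rwa [this] at h
  have hdufmax : ∀ x ∈ Set.Ici (0:ℝ),
      HasDerivWithinAt uf (-(ψmax 1 x - αmax 1 (ψmax 0 x))) (Set.Ici 0) x := by
    intro x hx
    have h := ((hchmax 0 (by omega) x hx).neg).add_const umax
    have : (fun t => -ψmax 0 t + umax) = uf := by
      funext t; rw [hbasemax t]; ring
    simp only [Pi.neg_apply] at h
    rwa [this] at h
  have hbnd : ∀ x ∈ Set.Ici (0:ℝ), ‖f' x‖ ≤ L := by
    intro x hx
    have hx0 : (0:ℝ) ≤ x := hx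
    have hu := (uniqueDiffOn_Ici (0:ℝ)) x hx
    have h1 := (hduf x hx).derivWithin hu
    have h2 := (hdufmax x hx).derivWithin hu
    have huniq : f' x = -(ψmax 1 x - αmax 1 (ψmax 0 x)) := by rw [← h1, ← h2]
    have hufb := hbounds x hx0
    have hψmin0 : ψmin 0 x ≤ umax - umin := by rw [hbasemin x]; linarith [hufb.2]
    have hψmax0 : ψmax 0 x ≤ umax - umin := by rw [hbasemax x]; linarith [hufb.1]
    have hψmin1 : 0 ≤ ψmin 1 x := hminall 1 hma x hx0
    have hψmax1 : 0 ≤ ψmax 1 x := hmaxall 1 hma x hx0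
    have hlo : -L ≤ f' x := by
      have : αmin 1 (ψmin 0 x) ≤ αmin 1 (umax - umin) := hmmin.monotone hψmin0
      have hle : αmin 1 (umax - umin) ≤ L := le_max_left _ _
      simp only [hf']
      linarith
    have hhi : f' x ≤ L := by
      have : αmax 1 (ψmax 0 x) ≤ αmax 1 (umax - umin) := hmmax.monotone hψmax0
      have hle : αmax 1 (umax - umin) ≤ L := le_max_right _ _
      rw [huniq]
      linarith
    rw [Real.norm_eq_abs, abs_le]
    exact ⟨hlo, hhi⟩
  have hconv : Convex ℝ (Set.Ici (0:ℝ)) := convex_Ici 0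
  intro t ht s hs
  have := hconv.norm_image_sub_le_of_norm_hasDerivWithin_le hduf hbnd hs ht
  simpa [Real.norm_eq_abs] using this
end

section
/- Let m ≥ 1, m_a ≥ 1, q ≥ 1, and u_min, u_max ∈ ℝ^q with u_min < u_max componentwise. For i ∈ {1, …, m} let αᵢ : ℝ → ℝ, for j ∈ {1, …, m_a} let βⱼ : ℝ → ℝ, and for each k ∈ {1, …, q} and j ∈ {1, …, m_a} let γ_{k,j}^{min}, γ_{k,j}^{max} : ℝ → ℝ, all continuous, strictly increasing with value 0 at 0. Let u_f : ℝ → ℝ^q, let ψ₀, …, ψₘ : ℝ → ℝ and φ₀, …, φ_{m_a} : ℝ → ℝ satisfy the glued chains ψ_{i+1}(t) = ψᵢ'(t) + α_{i+1}(ψᵢ(t)), φ₀ = ψₘ, φ_{j+1}(t) = φⱼ'(t) + β_{j+1}(φⱼ(t)) (all lower-level functions differentiable on [0, ∞)), with φ_{m_a}(t) ≥ 0 for all t ≥ 0 and ψᵢ(0) ≥ 0, φⱼ(0) ≥ 0 for all i < m, j < m_a. In addition, for each component k suppose the chains generated by b_k^{min}(t) = u_{f,k}(t) − u_{min,k} and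 b_k^{max}(t) = u_{max,k} − u_{f,k}(t) via the class κ functions γ_{k,j}^{min}, γ_{k,j}^{max} satisfy nonnegativity of their m_a-th level for all t ≥ 0 and nonnegativity of levels 0, …, m_a−1 at t = 0. Then for all t ≥ 0: ψ₀(t) ≥ 0; u_{min,k} ≤ u_{f,k}(t) ≤ u_{max,k} for every k; and each component u_{f,k} is Lipschitz continuous on [0, ∞) with constant L_k = max(γ_{k,1}^{min}(u_{max,k} − u_{min,k}), γ_{k,1}^{max}(u_{max,k} − u_{min,k})), so u_f is Lipschitz continuous as a vector-valued function. -/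
open Set in
lemma nonneg_invariant (κ : ℝ → ℝ) (hmono : StrictMono κ) (h0 : κ 0 = 0)
    (f g : ℝ → ℝ)
    (hderiv : ∀ t ≥ (0:ℝ), HasDerivWithinAt f (g t - κ (f t)) (Set.Ici 0) t)
    (hg : ∀ t ≥ (0:ℝ), 0 ≤ g t) (hinit : 0 ≤ f 0) :
    ∀ t ≥ (0:ℝ), 0 ≤ f t := by
  intro t₀ ht₀
  by_contra hneg
  push_neg at hneg
  have ht₀' : 0 < t₀ := by
    rcases lt_or_eq_of_le ht₀ with h | h
    · exact h
    · exfalso; rw [← h] at hneg; linarith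
  have fcont : ContinuousOn f (Ici 0) := fun t ht => (hderiv t ht).continuousWithinAt
  set A : Set ℝ := {t | t ∈ Icc 0 t₀ ∧ 0 ≤ f t} with hA
  have hA' : A = Icc 0 t₀ ∩ f ⁻¹' (Ici 0) := by
    ext x; simp [hA, and_comm]
  have hAc : IsClosed A := by
    rw [hA']
    exact ContinuousOn.preimage_isClosed_of_isClosed
      (fcont.mono (fun x hx => hx.1)) isClosed_Icc isClosed_Ici
  have hAcomp : IsCompact A := (isCompact_Icc).of_isClosed_subset hAc (fun x hx => hx.1)
  have hAne : A.Nonempty := ⟨0, ⟨le_refl _, le_of_lt ht₀'⟩, hinit⟩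
  obtain ⟨hsA⟩ : ∃ _ : sSup A ∈ A, True := ⟨hAcomp.sSup_mem hAne, trivial⟩
  set s := sSup A with hs
  have hs0 : 0 ≤ s := hsA.1.1
  have hst : s ≤ t₀ := hsA.1.2
  have hfs : 0 ≤ f s := hsA.2
  have hslt : s < t₀ := by
    rcases lt_or_eq_of_le hst with h | h
    · exact h
    · exfalso; rw [h] at hfs; linarith
  have hfneg : ∀ t ∈ Ioc s t₀, f t < 0 := by
    intro t ⟨hts, htt⟩
    by_contra h
    push_neg at h
    have : t ∈ A := ⟨⟨le_trans hs0 (le_of_lt hts), htt⟩, h⟩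
    have := le_csSup hAcomp.bddAbove this
    linarith
  have hmonoOn : StrictMonoOn f (Icc s t₀) := by
    apply StrictMonoOn.mono ?_ (le_refl _)
    apply strictMonoOn_of_deriv_pos (convex_Icc s t₀)
      (fcont.mono (fun x hx => le_trans hs0 hx.1))
    intro x hx
    rw [interior_Icc] at hx
    have hx0 : 0 < x := lt_of_le_of_lt hs0 hx.1
    have hd : HasDerivAt f (g x - κ (f x)) x :=
      (hderiv x hx0.le).hasDerivAt (Ici_mem_nhds hx0)
    rw [hd.deriv]
    have h1 : κ (f x) < 0 := by
      have := hmono (show f x < 0 from hfneg x ⟨hx.1, hx.2.le⟩)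
      rwa [h0] at this
    have := hg x hx0.le
    linarith
  have := hmonoOn ⟨le_refl s, hst⟩ ⟨hst, le_refl t₀⟩ hslt
  linarith

open Set in
lemma chain_nonneg (n : ℕ) (κ : ℕ → ℝ → ℝ)
    (hκ : ∀ j, 1 ≤ j → j ≤ n → StrictMono (κ j) ∧ κ j 0 = 0)
    (χ : ℕ → ℝ → ℝ)
    (hch : ∀ j < n, ∀ t ≥ (0:ℝ),
      HasDerivWithinAt (χ j) (χ (j+1) t - κ (j+1) (χ j t)) (Set.Ici 0) t)
    (htop : ∀ t ≥ (0:ℝ), 0 ≤ χ n t)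
    (hinit : ∀ j < n, 0 ≤ χ j 0) :
    ∀ j ≤ n, ∀ t ≥ (0:ℝ), 0 ≤ χ j t := by
  suffices h : ∀ d, ∀ j, j + d = n → ∀ t ≥ (0:ℝ), 0 ≤ χ j t by
    intro j hj; exact h (n - j) j (by omega)
  intro d
  induction d with
  | zero =>
    intro j hj
    have : j = n := by omega
    subst this; exact htop
  | succ d ih =>
    intro j hj
    have hjn : j < n := by omega
    exact nonneg_invariant (κ (j+1)) (hκ (j+1) (by omega) (by omega)).1
      (hκ (j+1) (by omega) (by omega)).2 (χ j) (χ (j+1))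
      (hch j hjn) (ih (j+1) (by omega)) (hinit j hjn)


/-- Corollary 1 (consequence of Theorems 2 and 3). Glued HOCBF/FCBF chains `ψ`, `φ`
(with `φ 0 = ψ m`) together with componentwise input-bound chains generated by
`u_{f,k} - u_{min,k}` and `u_{max,k} - u_{f,k}` yield simultaneously: safety `ψ 0 t ≥ 0`,
satisfaction of the input bounds `u_min ≤ u_f t ≤ u_max` componentwise, componentwise
Lipschitz continuity of `u_f` with constant
`L_k = max (γmin k 1 (u_max k - u_min k)) (γmax k 1 (u_max k - u_min k))`, and hence
Lipschitz continuity of `u_f` as a vector-valued function. -/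
theorem fcbf_corollary_safety_bounds_lipschitz
    (m ma q : ℕ) (hm : 1 ≤ m) (hma : 1 ≤ ma) (hq : 1 ≤ q)
    (umin umax : Fin q → ℝ) (hlt : ∀ k, umin k < umax k)
    (α β : ℕ → ℝ → ℝ)
    (γmin γmax : Fin q → ℕ → ℝ → ℝ)
    (hα : ∀ i, 1 ≤ i → i ≤ m →
      Continuous (α i) ∧ StrictMono (α i) ∧ α i 0 = 0)
    (hβ : ∀ j, 1 ≤ j → j ≤ ma →
      Continuous (β j) ∧ StrictMono (β j) ∧ β j 0 = 0)
    (hγmin : ∀ k, ∀ j, 1 ≤ j → j ≤ ma →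
      Continuous (γmin k j) ∧ StrictMono (γmin k j) ∧ γmin k j 0 = 0)
    (hγmax : ∀ k, ∀ j, 1 ≤ j → j ≤ ma →
      Continuous (γmax k j) ∧ StrictMono (γmax k j) ∧ γmax k j 0 = 0)
    (uf : ℝ → Fin q → ℝ)
    (ψ φ : ℕ → ℝ → ℝ)
    (hψchain : ∀ i < m, ∀ t ≥ (0 : ℝ),
      HasDerivWithinAt (ψ i) (ψ (i + 1) t - α (i + 1) (ψ i t)) (Set.Ici 0) t)
    (hbase : φ 0 = ψ m)
    (hφchain : ∀ j < ma, ∀ t ≥ (0 : ℝ),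
      HasDerivWithinAt (φ j) (φ (j + 1) t - β (j + 1) (φ j t)) (Set.Ici 0) t)
    (htop : ∀ t ≥ (0 : ℝ), 0 ≤ φ ma t)
    (hψinit : ∀ i < m, 0 ≤ ψ i 0)
    (hφinit : ∀ j < ma, 0 ≤ φ j 0)
    (χmin χmax : Fin q → ℕ → ℝ → ℝ)
    (hχbasemin : ∀ k, ∀ t, χmin k 0 t = uf t k - umin k)
    (hχbasemax : ∀ k, ∀ t, χmax k 0 t = umax k - uf t k)
    (hχchmin : ∀ k, ∀ j < ma, ∀ t ≥ (0 : ℝ),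
      HasDerivWithinAt (χmin k j)
        (χmin k (j + 1) t - γmin k (j + 1) (χmin k j t)) (Set.Ici 0) t)
    (hχchmax : ∀ k, ∀ j < ma, ∀ t ≥ (0 : ℝ),
      HasDerivWithinAt (χmax k j)
        (χmax k (j + 1) t - γmax k (j + 1) (χmax k j t)) (Set.Ici 0) t)
    (hχtopmin : ∀ k, ∀ t ≥ (0 : ℝ), 0 ≤ χmin k ma t)
    (hχtopmax : ∀ k, ∀ t ≥ (0 : ℝ), 0 ≤ χmax k ma t)
    (hχinitmin : ∀ k, ∀ j < ma, 0 ≤ χmin k j 0)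
    (hχinitmax : ∀ k, ∀ j < ma, 0 ≤ χmax k j 0) :
    (∀ t ≥ (0 : ℝ), 0 ≤ ψ 0 t) ∧
    (∀ t ≥ (0 : ℝ), ∀ k, umin k ≤ uf t k ∧ uf t k ≤ umax k) ∧
    (∀ k, ∀ t ≥ (0 : ℝ), ∀ s ≥ (0 : ℝ),
      |uf t k - uf s k| ≤
        max (γmin k 1 (umax k - umin k)) (γmax k 1 (umax k - umin k)) * |t - s|) ∧
    (∃ L : ℝ, 0 ≤ L ∧ ∀ t ≥ (0 : ℝ), ∀ s ≥ (0 : ℝ),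
      ‖uf t - uf s‖ ≤ L * |t - s|) := by
  -- nonnegativity of the φ chain
  have hφ : ∀ j ≤ ma, ∀ t ≥ (0:ℝ), 0 ≤ φ j t :=
    chain_nonneg ma β (fun j h1 h2 => ⟨(hβ j h1 h2).2.1, (hβ j h1 h2).2.2⟩)
      φ hφchain htop hφinit
  -- top of the ψ chain
  have hψtop : ∀ t ≥ (0:ℝ), 0 ≤ ψ m t := by
    intro t ht; rw [← hbase]; exact hφ 0 (Nat.zero_le _) t ht
  have hψ : ∀ i ≤ m, ∀ t ≥ (0:ℝ), 0 ≤ ψ i t :=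
    chain_nonneg m α (fun i h1 h2 => ⟨(hα i h1 h2).2.1, (hα i h1 h2).2.2⟩)
      ψ hψchain hψtop hψinit
  have hmin : ∀ k, ∀ j ≤ ma, ∀ t ≥ (0:ℝ), 0 ≤ χmin k j t := fun k =>
    chain_nonneg ma (γmin k) (fun j h1 h2 => ⟨(hγmin k j h1 h2).2.1, (hγmin k j h1 h2).2.2⟩)
      (χmin k) (hχchmin k) (hχtopmin k) (hχinitmin k)
  have hmax : ∀ k, ∀ j ≤ ma, ∀ t ≥ (0:ℝ), 0 ≤ χmax k j t := fun k =>
    chain_nonneg ma (γmax k) (fun j h1 h2 => ⟨(hγmax k j h1 h2).2.1, (hγmax k j h1 h2).2.2⟩)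
      (χmax k) (hχchmax k) (hχtopmax k) (hχinitmax k)
  have hbounds : ∀ t ≥ (0:ℝ), ∀ k, umin k ≤ uf t k ∧ uf t k ≤ umax k := by
    intro t ht k
    have h1 := hmin k 0 (Nat.zero_le _) t ht
    have h2 := hmax k 0 (Nat.zero_le _) t ht
    rw [hχbasemin] at h1; rw [hχbasemax] at h2
    constructor <;> linarith
  -- componentwise Lipschitz
  have hlip : ∀ k, ∀ t ≥ (0:ℝ), ∀ s ≥ (0:ℝ),
      |uf t k - uf s k| ≤
        max (γmin k 1 (umax k - umin k)) (γmax k 1 (umax k - umin k)) * |t - s| := by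
    intro k t ht s hs
    set L := max (γmin k 1 (umax k - umin k)) (γmax k 1 (umax k - umin k)) with hL
    -- derivative of uf · k within Ici 0
    have hufeq : (fun t => uf t k) = fun t => χmin k 0 t + umin k := by
      funext x; rw [hχbasemin]; ring
    have hufeq' : (fun t => uf t k) = fun t => umax k - χmax k 0 t := by
      funext x; rw [hχbasemax]; ring
    have hd : ∀ x ∈ Set.Ici (0:ℝ), HasDerivWithinAt (fun t => uf t k)
        (χmin k 1 x - γmin k 1 (χmin k 0 x)) (Set.Ici 0) x := by
      intro x hx
      rw [hufeq]
      exact (hχchmin k 0 hma x hx).add_const (umin k)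
    have hd' : ∀ x ∈ Set.Ici (0:ℝ), HasDerivWithinAt (fun t => uf t k)
        (-(χmax k 1 x - γmax k 1 (χmax k 0 x))) (Set.Ici 0) x := by
      intro x hx
      rw [hufeq']
      exact (hχchmax k 0 hma x hx).const_sub (umax k)
    have hbound : ∀ x ∈ Set.Ici (0:ℝ),
        ‖χmin k 1 x - γmin k 1 (χmin k 0 x)‖ ≤ L := by
      intro x hx
      have hx0 : (0:ℝ) ≤ x := hx
      have hub := (hbounds x hx0 k).2
      have hlb := (hbounds x hx0 k).1
      have h1 : χmin k 1 x - γmin k 1 (χmin k 0 x) ≥ -L := by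
        have hχ1 : 0 ≤ χmin k 1 x := hmin k 1 hma x hx0
        have hle : χmin k 0 x ≤ umax k - umin k := by
          rw [hχbasemin]; linarith
        have := (hγmin k 1 le_rfl hma).2.1.monotone hle
        have hLge : γmin k 1 (umax k - umin k) ≤ L := le_max_left _ _
        linarith
      have h2 : χmin k 1 x - γmin k 1 (χmin k 0 x) ≤ L := by
        -- by uniqueness of derivatives, equals -(χmax deriv)
        have hu : χmin k 1 x - γmin k 1 (χmin k 0 x)
            = -(χmax k 1 x - γmax k 1 (χmax k 0 x)) := by
          have e1 := (hd x hx).derivWithin (uniqueDiffOn_Ici 0 x hx)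
          have e2 := (hd' x hx).derivWithin (uniqueDiffOn_Ici 0 x hx)
          rw [← e1, ← e2]
        rw [hu]
        have hχ1 : 0 ≤ χmax k 1 x := hmax k 1 hma x hx0
        have hle : χmax k 0 x ≤ umax k - umin k := by
          rw [hχbasemax]; linarith
        have := (hγmax k 1 le_rfl hma).2.1.monotone hle
        have hLge : γmax k 1 (umax k - umin k) ≤ L := le_max_right _ _
        linarith
      rw [Real.norm_eq_abs, abs_le]
      exact ⟨h1, h2⟩
    have := (convex_Ici (0:ℝ)).norm_image_sub_le_of_norm_hasDerivWithin_le hd hbound hs ht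
    simpa [Real.norm_eq_abs] using this
  refine ⟨fun t ht => hψ 0 (Nat.zero_le _) t ht, hbounds, hlip, ?_⟩
  -- vector-valued Lipschitz
  set L : ℝ := ∑ k : Fin q,
    max (γmin k 1 (umax k - umin k)) (γmax k 1 (umax k - umin k)) with hLdef
  have hLk0 : ∀ k : Fin q,
      0 ≤ max (γmin k 1 (umax k - umin k)) (γmax k 1 (umax k - umin k)) := by
    intro k
    have h0 : γmin k 1 0 = 0 := (hγmin k 1 le_rfl hma).2.2
    have := (hγmin k 1 le_rfl hma).2.1 (show (0:ℝ) < umax k - umin k by linarith [hlt k])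
    rw [h0] at this
    exact le_max_of_le_left this.le
  have hL0 : 0 ≤ L := Finset.sum_nonneg fun k _ => hLk0 k
  refine ⟨L, hL0, fun t ht s hs => ?_⟩
  rw [pi_norm_le_iff_of_nonneg (by positivity)]
  intro k
  have hk : max (γmin k 1 (umax k - umin k)) (γmax k 1 (umax k - umin k)) ≤ L :=
    Finset.single_le_sum (fun k _ => hLk0 k) (Finset.mem_univ k)
  calc ‖(uf t - uf s) k‖ = |uf t k - uf s k| := by simp [Real.norm_eq_abs]
    _ ≤ max (γmin k 1 (umax k - umin k)) (γmax k 1 (umax k - umin k)) * |t - s| :=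
        hlip k t ht s hs
    _ ≤ L * |t - s| := by
        apply mul_le_mul_of_nonneg_right hk (abs_nonneg _)
end

section
/- Let τ > 0, u_min < u_max, and κ^{min} ≥ 0, κ^{max} ≥ 0 be real numbers. Let ν, u_f : ℝ → ℝ with u_f differentiable on [0, ∞) and satisfying the first-order low-pass filter dynamics u_f'(t) = (ν(t) − u_f(t))/τ for all t ≥ 0. Suppose for all t ≥ 0 the first-order barrier inequalities (ν(t) − u_f(t))/τ + κ^{min}(u_f(t) − u_min) ≥ 0 and −(ν(t) − u_f(t))/τ + κ^{max}(u_max − u_f(t)) ≥ 0 hold, and that u_min ≤ u_f(0) ≤ u_max. Then u_min ≤ u_f(t) ≤ u_max for all t ≥ 0, and u_f is Lipschitz continuous on [0, ∞) with |u_f(t) − u_f(s)| ≤ max(κ^{min}, κ^{max})·(u_max − u_min)·|t − s| for all t, s ≥ 0. -/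
/-- Corollary 2 (per component, first-order low-pass filter). Under the filter dynamics
`u_f' t = (ν t - u_f t) / τ` and the first-order input-bound barrier inequalities with
linear class κ functions `s ↦ κ^min s`, `s ↦ κ^max s`, the filtered input stays in
`[u_min, u_max]` and is Lipschitz continuous with constant
`max κ^min κ^max * (u_max - u_min)`. -/
theorem low_pass_filter_bounds_and_lipschitz
    (τ : ℝ) (hτ : 0 < τ)
    (umin umax : ℝ) (hlt : umin < umax)
    (κmin κmax : ℝ) (hκmin : 0 ≤ κmin) (hκmax : 0 ≤ κmax)
    (ν uf : ℝ → ℝ)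
    (hderiv : ∀ t ≥ (0 : ℝ),
      HasDerivWithinAt uf ((ν t - uf t) / τ) (Set.Ici 0) t)
    (hmin : ∀ t ≥ (0 : ℝ), 0 ≤ (ν t - uf t) / τ + κmin * (uf t - umin))
    (hmax : ∀ t ≥ (0 : ℝ), 0 ≤ -((ν t - uf t) / τ) + κmax * (umax - uf t))
    (hinit : umin ≤ uf 0 ∧ uf 0 ≤ umax) :
    (∀ t ≥ (0 : ℝ), umin ≤ uf t ∧ uf t ≤ umax) ∧
    (∀ t ≥ (0 : ℝ), ∀ s ≥ (0 : ℝ),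
      |uf t - uf s| ≤ max κmin κmax * (umax - umin) * |t - s|) := by
  have hIci : Convex ℝ (Set.Ici (0:ℝ)) := convex_Ici 0
  have hint : interior (Set.Ici (0:ℝ)) = Set.Ioi 0 := interior_Ici
  have hcont : ContinuousOn uf (Set.Ici 0) :=
    fun t ht => (hderiv t ht).continuousWithinAt
  -- derivative at interior points
  have hderiv' : ∀ t ∈ Set.Ioi (0:ℝ), HasDerivAt uf ((ν t - uf t) / τ) t := by
    intro t ht
    exact (hderiv t (le_of_lt ht)).hasDerivAt (Ici_mem_nhds ht)
  -- lower bound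
  have hF : MonotoneOn (fun t => Real.exp (κmin * t) * (uf t - umin)) (Set.Ici 0) := by
    apply monotoneOn_of_hasDerivWithinAt_nonneg hIci
      (f' := fun t => Real.exp (κmin * t) * ((ν t - uf t) / τ + κmin * (uf t - umin)))
    · exact ((Real.continuous_exp.comp (continuous_const.mul continuous_id)).continuousOn).mul
        (hcont.sub continuousOn_const)
    · intro t ht
      rw [hint] at ht
      have h1 : HasDerivAt (fun t => Real.exp (κmin * t)) (κmin * Real.exp (κmin * t)) t := by
        have := (Real.hasDerivAt_exp (κmin * t)).comp t
          ((hasDerivAt_id t).const_mul κmin)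
        simpa [mul_comm, Function.comp_def] using this
      have h2 : HasDerivAt (fun t => uf t - umin) ((ν t - uf t) / τ) t :=
        (hderiv' t ht).sub_const umin
      have := h1.mul h2
      refine (this.congr_deriv ?_).hasDerivWithinAt
      ring
    · intro t ht
      rw [hint] at ht
      exact mul_nonneg (Real.exp_nonneg _) (hmin t (le_of_lt ht))
  have hG : MonotoneOn (fun t => Real.exp (κmax * t) * (umax - uf t)) (Set.Ici 0) := by
    apply monotoneOn_of_hasDerivWithinAt_nonneg hIci
      (f' := fun t => Real.exp (κmax * t) * (-((ν t - uf t) / τ) + κmax * (umax - uf t)))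
    · exact ((Real.continuous_exp.comp (continuous_const.mul continuous_id)).continuousOn).mul
        (continuousOn_const.sub hcont)
    · intro t ht
      rw [hint] at ht
      have h1 : HasDerivAt (fun t => Real.exp (κmax * t)) (κmax * Real.exp (κmax * t)) t := by
        have := (Real.hasDerivAt_exp (κmax * t)).comp t
          ((hasDerivAt_id t).const_mul κmax)
        simpa [mul_comm, Function.comp_def] using this
      have h2 : HasDerivAt (fun t => umax - uf t) (-((ν t - uf t) / τ)) t :=
        (hderiv' t ht).const_sub umax
      have := h1.mul h2
      refine (this.congr_deriv ?_).hasDerivWithinAt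
      ring
    · intro t ht
      rw [hint] at ht
      exact mul_nonneg (Real.exp_nonneg _) (hmax t (le_of_lt ht))
  have hbounds : ∀ t ≥ (0:ℝ), umin ≤ uf t ∧ uf t ≤ umax := by
    intro t ht
    constructor
    · have := hF (Set.self_mem_Ici) ht ht
      simp only [mul_zero, Real.exp_zero, one_mul] at this
      have h0 : (0:ℝ) ≤ Real.exp (κmin * t) * (uf t - umin) :=
        le_trans (by linarith [hinit.1]) this
      nlinarith [Real.exp_pos (κmin * t)]
    · have := hG (Set.self_mem_Ici) ht ht
      simp only [mul_zero, Real.exp_zero, one_mul] at this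
      have h0 : (0:ℝ) ≤ Real.exp (κmax * t) * (umax - uf t) :=
        le_trans (by linarith [hinit.2]) this
      nlinarith [Real.exp_pos (κmax * t)]
  refine ⟨hbounds, ?_⟩
  intro t ht s hs
  have hb : ∀ x ∈ Set.Ici (0:ℝ), ‖(ν x - uf x) / τ‖ ≤ max κmin κmax * (umax - umin) := by
    intro x hx
    obtain ⟨h1, h2⟩ := hbounds x hx
    have e1 := hmin x hx
    have e2 := hmax x hx
    rw [Real.norm_eq_abs, abs_le]
    constructor
    · have : -((ν x - uf x) / τ) ≤ κmin * (uf x - umin) := by linarith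
      have h3 : κmin * (uf x - umin) ≤ max κmin κmax * (umax - umin) := by
        apply mul_le_mul (le_max_left _ _) (by linarith) (by linarith) (by positivity)
      linarith
    · have : (ν x - uf x) / τ ≤ κmax * (umax - uf x) := by linarith
      have h3 : κmax * (umax - uf x) ≤ max κmin κmax * (umax - umin) := by
        apply mul_le_mul (le_max_right _ _) (by linarith) (by linarith) (by positivity)
      linarith
  have := Convex.norm_image_sub_le_of_norm_hasDerivWithin_le
    (f := uf) (f' := fun x => (ν x - uf x) / τ) (s := Set.Ici 0)
    (fun x hx => hderiv x hx) hb hIci hs ht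
  simpa [Real.norm_eq_abs] using this
end

section
/- Let v, x_o, y_o, r_o, k₁, k₂ ∈ ℝ with k₁ > 0 and k₂ > 0. Let x, y, θ : ℝ → ℝ and u : ℝ → ℝ with x, y, θ differentiable, u continuous, satisfying x'(t) = v·cos(θ(t)), y'(t) = v·sin(θ(t)), θ'(t) = u(t) for all t ≥ 0. Define b(t) = (x(t) − x_o)² + (y(t) − y_o)² − r_o². Suppose for all t ≥ 0 the second-order HOCBF inequality (2(y(t) − y_o)·v·cos(θ(t)) − 2(x(t) − x_o)·v·sin(θ(t)))·u(t) + 2v² + (k₁ + k₂)·b'(t) + k₁k₂·b(t) ≥ 0 holds, and that b(0) ≥ 0 and b'(0) + k₁·b(0) ≥ 0. Then b(t) ≥ 0 for all t ≥ 0, i.e., (x(t) − x_o)² + (y(t) − y_o)² ≥ r_o² and the vehicle never enters the obstacle. -/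
/-- Grönwall-type lemma: if `f' + k f ≥ 0` on `[0,∞)` and `f 0 ≥ 0`, then `f ≥ 0` on `[0,∞)`. -/
lemma gronwall_nonneg (k : ℝ) (f f' : ℝ → ℝ) (hf : ∀ t, HasDerivAt f (f' t) t)
    (h : ∀ t ≥ (0 : ℝ), 0 ≤ f' t + k * f t) (h0 : 0 ≤ f 0) :
    ∀ t ≥ (0 : ℝ), 0 ≤ f t := by
  set g : ℝ → ℝ := fun t => f t * Real.exp (k * t) with hg
  have hgd : ∀ t, HasDerivAt g ((f' t + k * f t) * Real.exp (k * t)) t := by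
    intro t
    have he : HasDerivAt (fun t : ℝ => Real.exp (k * t)) (Real.exp (k * t) * k) t :=
      ((hasDerivAt_id t).const_mul k).exp.congr_deriv (by simp [mul_comm])
    have := (hf t).mul he
    exact this.congr_deriv (by ring)
  have hmono : MonotoneOn g (Set.Ici (0 : ℝ)) := by
    refine monotoneOn_of_deriv_nonneg (convex_Ici 0) ?_ ?_ ?_
    · exact fun t _ => (hgd t).continuousAt.continuousWithinAt
    · exact fun t _ => (hgd t).differentiableAt.differentiableWithinAt
    · intro t ht
      rw [interior_Ici] at ht
      rw [(hgd t).deriv]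
      exact mul_nonneg (h t (le_of_lt ht)) (Real.exp_pos _).le
  intro t ht
  have : g 0 ≤ g t := hmono (Set.self_mem_Ici) ht ht
  have hg0 : g 0 = f 0 := by simp [hg]
  have hgt : 0 ≤ g t := by rw [hg0] at this; linarith
  have hgtdef : g t = f t * Real.exp (k * t) := rfl
  nlinarith [Real.exp_pos (k * t), hgt, hgtdef]

/-- HOCBF safety guarantee instantiated for unicycle obstacle avoidance. With
`b t = (x t - x_o)² + (y t - y_o)² - r_o²` along solutions of
`x' = v cos θ, y' = v sin θ, θ' = u`, if the second-order HOCBF inequality (equation (11))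
`(2(y - y_o) v cos θ - 2(x - x_o) v sin θ) u + 2v² + (k₁ + k₂) b' + k₁ k₂ b ≥ 0`
holds for all `t ≥ 0`, with `b 0 ≥ 0` and `b' 0 + k₁ b 0 ≥ 0`, then `b t ≥ 0` for all
`t ≥ 0`, i.e. the vehicle never enters the obstacle. -/
theorem unicycle_hocbf_safety
    (v xo yo ro k₁ k₂ : ℝ) (hk₁ : 0 < k₁) (hk₂ : 0 < k₂)
    (x y θ u : ℝ → ℝ)
    (hx : ∀ t, HasDerivAt x (v * Real.cos (θ t)) t)
    (hy : ∀ t, HasDerivAt y (v * Real.sin (θ t)) t)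
    (hθ : ∀ t, HasDerivAt θ (u t) t)
    (hu : Continuous u)
    (b : ℝ → ℝ)
    (hb : ∀ t, b t = (x t - xo) ^ 2 + (y t - yo) ^ 2 - ro ^ 2)
    (hineq : ∀ t ≥ (0 : ℝ),
      0 ≤ (2 * (y t - yo) * v * Real.cos (θ t) - 2 * (x t - xo) * v * Real.sin (θ t)) * u t
            + 2 * v ^ 2 + (k₁ + k₂) * deriv b t + k₁ * k₂ * b t)
    (hinit₀ : 0 ≤ b 0)
    (hinit₁ : 0 ≤ deriv b 0 + k₁ * b 0) :
    ∀ t ≥ (0 : ℝ), 0 ≤ b t ∧ ro ^ 2 ≤ (x t - xo) ^ 2 + (y t - yo) ^ 2 := by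
  -- explicit first derivative of b
  set B₁ : ℝ → ℝ := fun t =>
    2 * (x t - xo) * (v * Real.cos (θ t)) + 2 * (y t - yo) * (v * Real.sin (θ t)) with hB₁
  have hbd : ∀ t, HasDerivAt b (B₁ t) t := by
    intro t
    have hbe : b = fun t => (x t - xo) ^ 2 + (y t - yo) ^ 2 - ro ^ 2 := funext hb
    rw [hbe]
    have h1 : HasDerivAt (fun t => (x t - xo) ^ 2)
        (2 * (x t - xo) * (v * Real.cos (θ t))) t := by
      have := (((hx t).sub_const xo).pow 2)
      exact this.congr_deriv (by ring)
    have h2 : HasDerivAt (fun t => (y t - yo) ^ 2)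
        (2 * (y t - yo) * (v * Real.sin (θ t))) t := by
      have := (((hy t).sub_const yo).pow 2)
      exact this.congr_deriv (by ring)
    exact (h1.add h2).sub_const _
  have hderiv : ∀ t, deriv b t = B₁ t := fun t => (hbd t).deriv
  -- second derivative of b (i.e. derivative of B₁)
  set B₂ : ℝ → ℝ := fun t =>
    2 * v ^ 2 +
      (2 * (y t - yo) * v * Real.cos (θ t) - 2 * (x t - xo) * v * Real.sin (θ t)) * u t with hB₂
  have hB₁d : ∀ t, HasDerivAt B₁ (B₂ t) t := by
    intro t
    have hc : HasDerivAt (fun t => Real.cos (θ t)) (-Real.sin (θ t) * u t) t := (hθ t).cos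
    have hs : HasDerivAt (fun t => Real.sin (θ t)) (Real.cos (θ t) * u t) t := (hθ t).sin
    have h1 : HasDerivAt (fun t => 2 * (x t - xo) * (v * Real.cos (θ t)))
        (2 * (v * Real.cos (θ t)) * (v * Real.cos (θ t)) +
          2 * (x t - xo) * (v * (-Real.sin (θ t) * u t))) t := by
      have := ((((hx t).sub_const xo).const_mul 2).mul (hc.const_mul v))
      exact this.congr_deriv (by ring)
    have h2 : HasDerivAt (fun t => 2 * (y t - yo) * (v * Real.sin (θ t)))
        (2 * (v * Real.sin (θ t)) * (v * Real.sin (θ t)) +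
          2 * (y t - yo) * (v * (Real.cos (θ t) * u t))) t := by
      have := ((((hy t).sub_const yo).const_mul 2).mul (hs.const_mul v))
      exact this.congr_deriv (by ring)
    have := h1.add h2
    refine this.congr_deriv ?_
    have hpy : Real.sin (θ t) ^ 2 + Real.cos (θ t) ^ 2 = 1 := Real.sin_sq_add_cos_sq _
    simp only [hB₂]; nlinarith [hpy]
  -- ψ₁ ≥ 0 on [0,∞)
  set ψ : ℝ → ℝ := fun t => B₁ t + k₁ * b t with hψ
  have hψd : ∀ t, HasDerivAt ψ (B₂ t + k₁ * B₁ t) t :=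
    fun t => (hB₁d t).add ((hbd t).const_mul k₁)
  have hψnn : ∀ t ≥ (0 : ℝ), 0 ≤ ψ t := by
    apply gronwall_nonneg k₂ ψ (fun t => B₂ t + k₁ * B₁ t) hψd
    · intro t ht
      have := hineq t ht
      rw [hderiv t] at this
      simp only [hψ, hB₂, hB₁]
      simp only [hB₁] at this
      nlinarith [this]
    · simpa [hψ, hderiv 0] using hinit₁
  -- b ≥ 0 on [0,∞)
  have hbnn : ∀ t ≥ (0 : ℝ), 0 ≤ b t := by
    apply gronwall_nonneg k₁ b B₁ hbd _ hinit₀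
    intro t ht
    exact hψnn t ht
  intro t ht
  refine ⟨hbnn t ht, ?_⟩
  have := hbnn t ht
  rw [hb t] at this
  linarith
end

section
/- Let α : ℝ → ℝ be continuous and strictly increasing with α(0) = 0, let n ≥ 1, let f : ℝⁿ → ℝⁿ and g : ℝⁿ → ℝ^{n×q} be functions, u : ℝ → ℝ^q a control signal, and x : ℝ → ℝⁿ a trajectory satisfying x'(t) = f(x(t)) + g(x(t)) u(t) for all t ≥ 0. Let b : ℝⁿ → ℝ be continuously differentiable and suppose Db(x(t))(f(x(t)) + g(x(t)) u(t)) + α(b(x(t))) ≥ 0 for all t ≥ 0 and b(x(0)) ≥ 0. Then b(x(t)) ≥ 0 for all t ≥ 0, i.e., the set C = {z ∈ ℝⁿ : b(z) ≥ 0} is forward invariant along the trajectory. -/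
/-- Relative-degree-one case of the HOCBF safety guarantee (the classical CBF
forward-invariance result along a trajectory of `ẋ = f x + g x * u`): if `b` is
continuously differentiable, `Db(x t)(f (x t) + g (x t) * u t) + α (b (x t)) ≥ 0`
for all `t ≥ 0` with `α` extended class κ, and `b (x 0) ≥ 0`, then `b (x t) ≥ 0`
for all `t ≥ 0`, i.e. the set `{z : b z ≥ 0}` is forward invariant along the
trajectory. -/
theorem cbf_forward_invariance
    (α : ℝ → ℝ) (hαc : Continuous α) (hαm : StrictMono α) (hα0 : α 0 = 0)
    (n q : ℕ) (hn : 1 ≤ n)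
    (f : (Fin n → ℝ) → (Fin n → ℝ))
    (g : (Fin n → ℝ) → Matrix (Fin n) (Fin q) ℝ)
    (u : ℝ → (Fin q → ℝ)) (x : ℝ → (Fin n → ℝ))
    (hx : ∀ t ≥ (0 : ℝ), HasDerivAt x (f (x t) + (g (x t)).mulVec (u t)) t)
    (b : (Fin n → ℝ) → ℝ) (hb : ContDiff ℝ 1 b)
    (hineq : ∀ t ≥ (0 : ℝ),
      0 ≤ fderiv ℝ b (x t) (f (x t) + (g (x t)).mulVec (u t)) + α (b (x t)))
    (hinit : 0 ≤ b (x 0)) :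
    ∀ t ≥ (0 : ℝ), x t ∈ {z : Fin n → ℝ | 0 ≤ b z} := by
  set h : ℝ → ℝ := fun t => b (x t) with hh
  have hD : ∀ t ≥ (0 : ℝ),
      HasDerivAt h (fderiv ℝ b (x t) (f (x t) + (g (x t)).mulVec (u t))) t := by
    intro t ht
    exact ((hb.differentiable one_ne_zero (x t)).hasFDerivAt).comp_hasDerivAt t (hx t ht)
  by_contra hcon
  push_neg at hcon
  obtain ⟨t₁, ht₁0, ht₁⟩ := hcon
  simp only [Set.mem_setOf_eq, not_le] at ht₁
  set S : Set ℝ := Set.Icc 0 t₁ ∩ {t | 0 ≤ h t} with hS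
  have hScont : ContinuousOn h (Set.Icc 0 t₁) := fun t ht =>
    ((hD t ht.1).continuousAt).continuousWithinAt
  have hSclosed : IsClosed S :=
    hScont.preimage_isClosed_of_isClosed isClosed_Icc isClosed_Ici
  have hSne : S.Nonempty := ⟨0, ⟨le_rfl, ht₁0⟩, hinit⟩
  have hSbdd : BddAbove S := BddAbove.mono Set.inter_subset_left bddAbove_Icc
  obtain ⟨s, hsS, hsub⟩ : ∃ s, s ∈ S ∧ ∀ t ∈ S, t ≤ s :=
    ⟨sSup S, hSclosed.csSup_mem hSne hSbdd, fun t ht => le_csSup hSbdd ht⟩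
  have hs0 : 0 ≤ s := hsS.1.1
  have hst₁ : s ≤ t₁ := hsS.1.2
  have hhs : 0 ≤ h s := hsS.2
  have hslt : s < t₁ := lt_of_le_of_ne hst₁ (by
    rintro rfl
    exact absurd hhs (not_le.mpr ht₁))
  have hneg : ∀ t ∈ Set.Ioc s t₁, h t < 0 := by
    intro t ht
    by_contra hge
    push_neg at hge
    have : t ∈ S := ⟨⟨le_trans hs0 ht.1.le, ht.2⟩, hge⟩
    exact absurd (hsub t this) (not_le.mpr ht.1)
  have hmono : StrictMonoOn h (Set.Icc s t₁) := by
    apply strictMonoOn_of_deriv_pos (convex_Icc s t₁)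
    · exact hScont.mono (Set.Icc_subset_Icc hs0 le_rfl)
    · intro t ht
      rw [interior_Icc] at ht
      have ht0 : (0 : ℝ) ≤ t := le_trans hs0 ht.1.le
      have hdt := hD t ht0
      rw [hdt.deriv]
      have hαneg : α (h t) < 0 := by
        rw [← hα0]
        exact hαm (hneg t ⟨ht.1, ht.2.le⟩)
      have := hineq t ht0
      linarith
  have : h s < h t₁ :=
    hmono (Set.left_mem_Icc.mpr hst₁) (Set.right_mem_Icc.mpr hst₁) hslt
  linarith
end
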